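/- Let U = Ũ_1·Ũ_2⋯Ũ_{N−r+1} (product in increasing order of indices), where the embedded factors are built from unitary matrices U_k ∈ ℂ^{(r+1)×(r+1)} (k = 1,…,N−r) and a unitary matrix U_{N−r+1} ∈ ℂ^{r×r}. Partition each conjugate transpose U_k^* = [[p_U(k), d_U(k)],[a_U(k), q_U(k)]] with blocks of sizes 1×r, 1×1, r×r, r×1, and set p_U(N−r+1) = U_{N−r+1}^*. Then U^* is a unitary matrix that is simultaneously a lower Green matrix of order r and an upper band matrix of order r; the matrices p_U(i), q_U(i), a_U(i) (i = 1,…,N−r), p_U(N−r+1) are lower Green generators of U^*; and U^*(k, k+r) = d_U(k) for k = 1,…,N−r. -/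

import Mathlib

open Matrix

noncomputable section

/-- `A(i,j) = 0` whenever `i - j > r` (1-based; identical in 0-based `Fin` indexing). -/
def IsLowerBand (N r : ℕ) (A : Matrix (Fin N) (Fin N) ℂ) : Prop :=
  ∀ i j : Fin N, (j : ℕ) + r < (i : ℕ) → A i j = 0

/-- `A(i,j) = 0` whenever `j - i > r`. -/
def IsUpperBand (N r : ℕ) (A : Matrix (Fin N) (Fin N) ℂ) : Prop :=
  ∀ i j : Fin N, (i : ℕ) + r < (j : ℕ) → A i j = 0

/-- `rank B(k:N, 1:k+r-1) ≤ r` for every `k = 1, …, N-r` (1-based). -/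
def IsLowerGreen (N r : ℕ) (B : Matrix (Fin N) (Fin N) ℂ) : Prop :=
  ∀ (k : ℕ) (hk1 : 1 ≤ k) (hk2 : k ≤ N - r),
    (B.submatrix
      (fun i : Fin (N - k + 1) => (⟨k - 1 + (i : ℕ), by have := i.isLt; omega⟩ : Fin N))
      (fun j : Fin (k + r - 1) => (⟨(j : ℕ), by have := j.isLt; omega⟩ : Fin N))).rank ≤ r

/-- `rank B(1:k+r-1, k:N) ≤ r` for every `k = 1, …, N-r` (1-based). -/
def IsUpperGreen (N r : ℕ) (B : Matrix (Fin N) (Fin N) ℂ) : Prop :=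
  ∀ (k : ℕ) (hk1 : 1 ≤ k) (hk2 : k ≤ N - r),
    (B.submatrix
      (fun i : Fin (k + r - 1) => (⟨(i : ℕ), by have := i.isLt; omega⟩ : Fin N))
      (fun j : Fin (N - k + 1) => (⟨k - 1 + (j : ℕ), by have := j.isLt; omega⟩ : Fin N))).rank ≤ r

/-- `a^>_{i,s} = a(i-1) a(i-2) ⋯ a(s+1)`, equal to `I_r` when `s ≥ i - 1`. -/
def aGT (r : ℕ) (a : ℕ → Matrix (Fin r) (Fin r) ℂ) (i s : ℕ) :
    Matrix (Fin r) (Fin r) ℂ :=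
  (((List.range' (s + 1) (i - 1 - s)).reverse).map a).prod

/-- `p(i) ∈ ℂ^{1×r}` (i = 1,…,N−r), `pLast = p(N−r+1) ∈ ℂ^{r×r}`, `q(j) ∈ ℂ^{r×1}`,
`a(k) ∈ ℂ^{r×r}` are lower Green generators of the `N×N` matrix `B`:
`B(i,1:r) = p(i)·a^>_{i,0}`, `B(i,r+s-1) = p(i)·a^>_{i,s-1}·q(s-1)` for `2 ≤ s ≤ i ≤ N-r`,
and the analogous identities for the last `r` rows `B(N-r+1:N, ·)` with `pLast`. -/
def IsLowerGreenGenerators (N r : ℕ) (hNr : r < N)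
    (p : ℕ → Matrix (Fin 1) (Fin r) ℂ) (q : ℕ → Matrix (Fin r) (Fin 1) ℂ)
    (a : ℕ → Matrix (Fin r) (Fin r) ℂ) (pLast : Matrix (Fin r) (Fin r) ℂ)
    (B : Matrix (Fin N) (Fin N) ℂ) : Prop :=
  (∀ (i : ℕ) (hi1 : 1 ≤ i) (hi2 : i ≤ N - r) (j : Fin r),
      B ⟨i - 1, by omega⟩ ⟨(j : ℕ), by have := j.isLt; omega⟩ = (p i * aGT r a i 0) 0 j)
  ∧ (∀ (i : ℕ) (hi1 : 1 ≤ i) (hi2 : i ≤ N - r) (s : ℕ) (hs1 : 2 ≤ s) (hs2 : s ≤ i),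
      B ⟨i - 1, by omega⟩ ⟨r + s - 2, by omega⟩
        = (p i * aGT r a i (s - 1) * q (s - 1)) 0 0)
  ∧ (∀ (t : Fin r) (j : Fin r),
      B ⟨N - r + (t : ℕ), by have := t.isLt; omega⟩ ⟨(j : ℕ), by have := j.isLt; omega⟩
        = (pLast * aGT r a (N - r + 1) 0) t j)
  ∧ (∀ (t : Fin r) (s : ℕ) (hs1 : 2 ≤ s) (hs2 : s ≤ N - r + 1),
      B ⟨N - r + (t : ℕ), by have := t.isLt; omega⟩ ⟨r + s - 2, by omega⟩
        = (pLast * aGT r a (N - r + 1) (s - 1) * q (s - 1)) t 0)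

/-- The embedded factor `I_{k-1} ⊕ M ⊕ I_{N-k-r}` (1-based block position `k`),
i.e. `M` occupies (1-based) rows and columns `k, …, k+r` of an `N×N` identity. -/
def embed (N r k : ℕ) (M : Matrix (Fin (r + 1)) (Fin (r + 1)) ℂ) :
    Matrix (Fin N) (Fin N) ℂ :=
  Matrix.of fun i j =>
    if h : k - 1 ≤ (i : ℕ) ∧ (i : ℕ) < k + r ∧ k - 1 ≤ (j : ℕ) ∧ (j : ℕ) < k + r then
      M ⟨(i : ℕ) - (k - 1), by omega⟩ ⟨(j : ℕ) - (k - 1), by omega⟩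
    else if (i : ℕ) = (j : ℕ) then 1 else 0

/-- The embedded last factor `I_{N-r} ⊕ M`. -/
def embedLast (N r : ℕ) (M : Matrix (Fin r) (Fin r) ℂ) : Matrix (Fin N) (Fin N) ℂ :=
  Matrix.of fun i j =>
    if h : N - r ≤ (i : ℕ) ∧ N - r ≤ (j : ℕ) then
      M ⟨(i : ℕ) - (N - r), by have := i.isLt; omega⟩
        ⟨(j : ℕ) - (N - r), by have := j.isLt; omega⟩
    else if (i : ℕ) = (j : ℕ) then 1 else 0

/-- `G̃_1 · G̃_2 ⋯ G̃_{N-r}` (increasing order of indices). -/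
def prodAsc (N r : ℕ) (G : ℕ → Matrix (Fin (r + 1)) (Fin (r + 1)) ℂ) :
    Matrix (Fin N) (Fin N) ℂ :=
  ((List.range' 1 (N - r)).map (fun k => embed N r k (G k))).prod

/-- `G̃_{N-r} · G̃_{N-r-1} ⋯ G̃_1` (decreasing order of indices). -/
def prodDesc (N r : ℕ) (G : ℕ → Matrix (Fin (r + 1)) (Fin (r + 1)) ℂ) :
    Matrix (Fin N) (Fin N) ℂ :=
  (((List.range' 1 (N - r)).reverse).map (fun k => embed N r k (G k))).prod

/-- The `1×r` block `p` of the partition `M = [[p, d], [a, q]]`. -/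
def blkP (r : ℕ) (M : Matrix (Fin (r + 1)) (Fin (r + 1)) ℂ) : Matrix (Fin 1) (Fin r) ℂ :=
  Matrix.of fun _ j => M 0 j.castSucc

/-- The `1×1` block `d` of the partition `M = [[p, d], [a, q]]`. -/
def blkD (r : ℕ) (M : Matrix (Fin (r + 1)) (Fin (r + 1)) ℂ) : ℂ := M 0 (Fin.last r)

/-- The `r×r` block `a` of the partition `M = [[p, d], [a, q]]`. -/
def blkA (r : ℕ) (M : Matrix (Fin (r + 1)) (Fin (r + 1)) ℂ) : Matrix (Fin r) (Fin r) ℂ :=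
  Matrix.of fun i j => M i.succ j.castSucc

/-- The `r×1` block `q` of the partition `M = [[p, d], [a, q]]`. -/
def blkQ (r : ℕ) (M : Matrix (Fin (r + 1)) (Fin (r + 1)) ℂ) : Matrix (Fin r) (Fin 1) ℂ :=
  Matrix.of fun i _ => M i.succ (Fin.last r)

/-- Assemble the `(r+1)×(r+1)` matrix `[[p, d], [a, q]]` from its blocks. -/
def mkBlk (r : ℕ) (p : Matrix (Fin 1) (Fin r) ℂ) (d : ℂ)
    (a : Matrix (Fin r) (Fin r) ℂ) (q : Matrix (Fin r) (Fin 1) ℂ) :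
    Matrix (Fin (r + 1)) (Fin (r + 1)) ℂ :=
  Matrix.of fun i j =>
    if hi : (i : ℕ) = 0 then
      if hj : (j : ℕ) < r then p 0 ⟨(j : ℕ), hj⟩ else d
    else
      if hj : (j : ℕ) < r then a ⟨(i : ℕ) - 1, by have := i.isLt; omega⟩ ⟨(j : ℕ), hj⟩
      else q ⟨(i : ℕ) - 1, by have := i.isLt; omega⟩ 0

/-- The elementary Gauss factor `[[1, 0_{1×r}], [-f, I_r]]`. -/
def elemL (r : ℕ) (f : Matrix (Fin r) (Fin 1) ℂ) :
    Matrix (Fin (r + 1)) (Fin (r + 1)) ℂ :=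
  Matrix.of fun i j =>
    if hi : (i : ℕ) = 0 then (if (j : ℕ) = 0 then 1 else 0)
    else if hj : (j : ℕ) = 0 then -f ⟨(i : ℕ) - 1, by have := i.isLt; omega⟩ 0
    else if (i : ℕ) = (j : ℕ) then 1 else 0

/-- The elementary factor `[[I_r, 0_{r×1}], [-g, 1]]`. -/
def elemLrow (r : ℕ) (g : Matrix (Fin 1) (Fin r) ℂ) :
    Matrix (Fin (r + 1)) (Fin (r + 1)) ℂ :=
  Matrix.of fun i j =>
    if hi : (i : ℕ) < r then
      (if hj : (j : ℕ) < r then (if (i : ℕ) = (j : ℕ) then 1 else 0) else 0)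
    else if hj : (j : ℕ) < r then -g 0 ⟨(j : ℕ), hj⟩ else 1

/-- All leading principal minors are nonzero. -/
def StronglyRegular (N : ℕ) (A : Matrix (Fin N) (Fin N) ℂ) : Prop :=
  ∀ (k : ℕ) (hk : k ≤ N), 1 ≤ k →
    (A.submatrix (Fin.castLE hk) (Fin.castLE hk)).det ≠ 0

set_option linter.unnecessarySeqFocus false
set_option linter.unreachableTactic false
set_option linter.unusedTactic false
set_option maxHeartbeats 1000000

lemma aGT_eq_one (r : ℕ) (a : ℕ → Matrix (Fin r) (Fin r) ℂ) {i s : ℕ} (h : i ≤ s + 1) :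
    aGT r a i s = 1 := by
  unfold aGT
  have h0 : i - 1 - s = 0 := by omega
  rw [h0]
  simp

lemma aGT_succ (r : ℕ) (a : ℕ → Matrix (Fin r) (Fin r) ℂ) {i s : ℕ} (h : s + 1 ≤ i) :
    a i * aGT r a i s = aGT r a (i + 1) s := by
  unfold aGT
  have h1 : i + 1 - 1 - s = (i - 1 - s) + 1 := by omega
  rw [h1, List.range'_concat]
  have h2 : s + 1 + 1 * (i - 1 - s) = i := by omega
  rw [h2]
  simp [List.prod_append]

lemma aGT_mul (r : ℕ) (a : ℕ → Matrix (Fin r) (Fin r) ℂ) {i m s : ℕ} (h1 : s ≤ m) (h2 : m < i) :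
    aGT r a i m * aGT r a (m + 1) s = aGT r a i s := by
  unfold aGT
  have key : List.range' (s+1) (m - s) ++ List.range' (m+1) (i-1-m) = List.range' (s+1) (i-1-s) := by
    have h3 : List.range' (s+1) (m-s) 1 ++ List.range' (s+1 + 1*(m-s)) (i-1-m) 1
        = List.range' (s+1) ((i-1-m) + (m-s)) 1 := by
      rw [Nat.add_comm (i-1-m)]; exact List.range'_append
    simp only [one_mul] at h3
    have e1 : s + 1 + (m - s) = m + 1 := by omega
    have e2 : i - 1 - m + (m - s) = i - 1 - s := by omega
    rw [e1] at h3
    rw [← e2]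
    exact h3
  have h4 : m + 1 - 1 - s = m - s := by omega
  rw [h4, ← key, List.reverse_append, List.map_append, List.prod_append]

lemma sum_window {N : ℕ} (c w : ℕ) (hcw : c + w ≤ N) (f : Fin N → ℂ)
    (hf : ∀ l : Fin N, ((l : ℕ) < c ∨ c + w ≤ (l : ℕ)) → f l = 0) :
    ∑ l, f l = ∑ u : Fin w, f ⟨c + (u : ℕ), by have := u.isLt; omega⟩ := by
  classical
  have hinj : Function.Injective (fun u : Fin w => (⟨c + (u:ℕ), by have := u.isLt; omega⟩ : Fin N)) := by
    intro x y h
    have := congrArg Fin.val h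
    apply Fin.ext
    simp only [Fin.val_mk] at this
    omega
  have hs := Finset.sum_subset (Finset.subset_univ (Finset.univ.map ⟨_, hinj⟩))
    (fun l _ hl => hf l (by
      by_contra hc
      push_neg at hc
      apply hl
      simp only [Finset.mem_map, Finset.mem_univ, true_and, Function.Embedding.coeFn_mk]
      exact ⟨⟨(l:ℕ) - c, by omega⟩, by apply Fin.ext; simp; omega⟩))
  rw [← hs, Finset.sum_map]
  rfl

lemma embed_apply_in {N r : ℕ} (k : ℕ) (M : Matrix (Fin (r+1)) (Fin (r+1)) ℂ) (i j : Fin N)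
    (hi1 : k - 1 ≤ (i:ℕ)) (hi2 : (i:ℕ) < k + r) (hj1 : k - 1 ≤ (j:ℕ)) (hj2 : (j:ℕ) < k + r) :
    embed N r k M i j = M ⟨(i:ℕ) - (k-1), by omega⟩ ⟨(j:ℕ) - (k-1), by omega⟩ := by
  unfold embed
  rw [Matrix.of_apply, dif_pos ⟨hi1, hi2, hj1, hj2⟩]

lemma embed_apply_out {N r : ℕ} (k : ℕ) (M : Matrix (Fin (r+1)) (Fin (r+1)) ℂ) (i j : Fin N)
    (h : ¬((k-1 ≤ (i:ℕ) ∧ (i:ℕ) < k + r) ∧ (k-1 ≤ (j:ℕ) ∧ (j:ℕ) < k+r))) :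
    embed N r k M i j = if (i:ℕ) = (j:ℕ) then 1 else 0 := by
  unfold embed
  rw [Matrix.of_apply, dif_neg (by tauto)]

lemma embed_conjTranspose {N r : ℕ} (k : ℕ) (M : Matrix (Fin (r+1)) (Fin (r+1)) ℂ) :
    (embed N r k M)ᴴ = embed N r k Mᴴ := by
  ext i j
  rw [Matrix.conjTranspose_apply]
  unfold embed
  by_cases hi : k - 1 ≤ (i:ℕ) ∧ (i:ℕ) < k + r
  · by_cases hj : k - 1 ≤ (j:ℕ) ∧ (j:ℕ) < k + r
    · rw [Matrix.of_apply, Matrix.of_apply, dif_pos ⟨hj.1, hj.2, hi.1, hi.2⟩,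
        dif_pos ⟨hi.1, hi.2, hj.1, hj.2⟩]
      rfl
    · rw [Matrix.of_apply, Matrix.of_apply, dif_neg (by tauto), dif_neg (by tauto)]
      by_cases hij : (i:ℕ) = (j:ℕ)
      · rw [if_pos hij.symm, if_pos hij]; simp
      · rw [if_neg (fun h => hij h.symm), if_neg hij]; simp
  · rw [Matrix.of_apply, Matrix.of_apply, dif_neg (by tauto), dif_neg (by tauto)]
    by_cases hij : (i:ℕ) = (j:ℕ)
    · rw [if_pos hij.symm, if_pos hij]; simp
    · rw [if_neg (fun h => hij h.symm), if_neg hij]; simp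

lemma embed_mul {N r : ℕ} (k : ℕ) (hk : 1 ≤ k) (hkN : k + r ≤ N)
    (M M' : Matrix (Fin (r+1)) (Fin (r+1)) ℂ) :
    embed N r k M * embed N r k M' = embed N r k (M * M') := by
  ext i j
  rw [Matrix.mul_apply]
  by_cases hi : k - 1 ≤ (i:ℕ) ∧ (i:ℕ) < k + r
  · have hz : ∀ l : Fin N, ((l:ℕ) < k - 1 ∨ (k - 1) + (r + 1) ≤ (l:ℕ)) →
        embed N r k M i l * embed N r k M' l j = 0 := by
      intro l hl
      rw [embed_apply_out k M i l (by omega), if_neg (by omega), zero_mul]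
    rw [sum_window (k-1) (r+1) (by omega) _ hz]
    have hrw : ∀ u : Fin (r+1),
        embed N r k M i ⟨k - 1 + (u:ℕ), by have := u.isLt; omega⟩ = M ⟨(i:ℕ) - (k-1), by omega⟩ u := by
      intro u
      rw [embed_apply_in k M i _ hi.1 hi.2 (by simp) (by have := u.isLt; simp <;> omega)]
      congr 1
      apply Fin.ext
      simp
    by_cases hj : k - 1 ≤ (j:ℕ) ∧ (j:ℕ) < k + r
    · have hrw2 : ∀ u : Fin (r+1),
          embed N r k M' ⟨k - 1 + (u:ℕ), by have := u.isLt; omega⟩ j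
            = M' u ⟨(j:ℕ) - (k-1), by omega⟩ := by
        intro u
        rw [embed_apply_in k M' _ j (by simp) (by have := u.isLt; simp <;> omega) hj.1 hj.2]
        congr 1
        apply Fin.ext
        simp
      rw [embed_apply_in k (M*M') i j hi.1 hi.2 hj.1 hj.2, Matrix.mul_apply]
      exact Finset.sum_congr rfl fun u _ => by rw [hrw u, hrw2 u]
    · rw [embed_apply_out k (M*M') i j (by tauto), if_neg (by omega)]
      apply Finset.sum_eq_zero
      intro u _
      rw [embed_apply_out k M' _ j (by tauto), if_neg (by simp <;> omega), mul_zero]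
  · have hz : ∀ l : Fin N, l ≠ i → embed N r k M i l * embed N r k M' l j = 0 := by
      intro l hl
      rw [embed_apply_out k M i l (by tauto), if_neg (fun h => hl (Fin.ext h.symm)), zero_mul]
    rw [Finset.sum_eq_single i (fun l _ h => hz l h) (by intro h; exact absurd (Finset.mem_univ i) h)]
    rw [embed_apply_out k M i i (by tauto), if_pos rfl, one_mul]
    by_cases hj : k - 1 ≤ (j:ℕ) ∧ (j:ℕ) < k + r
    · rw [embed_apply_out k M' i j (by tauto), embed_apply_out k (M*M') i j (by tauto)]
    · rw [embed_apply_out k M' i j (by tauto), embed_apply_out k (M*M') i j (by tauto)]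

lemma embed_one {N r : ℕ} (k : ℕ) : embed N r k (1 : Matrix (Fin (r+1)) (Fin (r+1)) ℂ) = 1 := by
  ext i j
  unfold embed
  rw [Matrix.of_apply, Matrix.one_apply]
  by_cases h : (k - 1 ≤ (i : ℕ) ∧ (i : ℕ) < k + r ∧ k - 1 ≤ (j : ℕ) ∧ (j : ℕ) < k + r)
  · rw [dif_pos h, Matrix.one_apply]
    by_cases hij : i = j
    · subst hij
      rw [if_pos rfl, if_pos rfl]
    · rw [if_neg hij, if_neg (by intro hh; exact hij (Fin.ext (by
        have := congrArg Fin.val hh; simp at this; omega)))]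
  · rw [dif_neg h]
    by_cases hij : i = j
    · rw [if_pos (congrArg Fin.val hij), if_pos hij]
    · rw [if_neg (fun hh => hij (Fin.ext hh)), if_neg hij]

lemma embedLast_apply_in {N r : ℕ} (M : Matrix (Fin r) (Fin r) ℂ) (i j : Fin N)
    (hi : N - r ≤ (i:ℕ)) (hj : N - r ≤ (j:ℕ)) :
    embedLast N r M i j = M ⟨(i:ℕ) - (N-r), by have := i.isLt; omega⟩
      ⟨(j:ℕ) - (N-r), by have := j.isLt; omega⟩ := by
  unfold embedLast
  rw [Matrix.of_apply, dif_pos ⟨hi, hj⟩]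

lemma embedLast_apply_out {N r : ℕ} (M : Matrix (Fin r) (Fin r) ℂ) (i j : Fin N)
    (h : ¬(N - r ≤ (i:ℕ) ∧ N - r ≤ (j:ℕ))) :
    embedLast N r M i j = if (i:ℕ) = (j:ℕ) then 1 else 0 := by
  unfold embedLast
  rw [Matrix.of_apply, dif_neg h]

lemma embedLast_conjTranspose {N r : ℕ} (M : Matrix (Fin r) (Fin r) ℂ) :
    (embedLast N r M)ᴴ = embedLast N r Mᴴ := by
  ext i j
  rw [Matrix.conjTranspose_apply]
  by_cases h : N - r ≤ (i:ℕ) ∧ N - r ≤ (j:ℕ)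
  · rw [embedLast_apply_in M j i h.2 h.1, embedLast_apply_in Mᴴ i j h.1 h.2]
    rfl
  · rw [embedLast_apply_out M j i (by tauto), embedLast_apply_out Mᴴ i j (by tauto)]
    by_cases hij : (i:ℕ) = (j:ℕ)
    · rw [if_pos hij.symm, if_pos hij]; simp
    · rw [if_neg (fun hh => hij hh.symm), if_neg hij]; simp

lemma embedLast_mul {N r : ℕ} (hrN : r ≤ N) (M M' : Matrix (Fin r) (Fin r) ℂ) :
    embedLast N r M * embedLast N r M' = embedLast N r (M * M') := by
  ext i j
  rw [Matrix.mul_apply]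
  by_cases hi : N - r ≤ (i:ℕ)
  · have hz : ∀ l : Fin N, ((l:ℕ) < N - r ∨ (N - r) + r ≤ (l:ℕ)) →
        embedLast N r M i l * embedLast N r M' l j = 0 := by
      intro l hl
      have hl' : (l:ℕ) < N - r := by have := l.isLt; omega
      rw [embedLast_apply_out M i l (by omega), if_neg (by omega), zero_mul]
    rw [sum_window (N-r) r (by omega) _ hz]
    have hrw : ∀ u : Fin r,
        embedLast N r M i ⟨N - r + (u:ℕ), by have := u.isLt; omega⟩
          = M ⟨(i:ℕ) - (N-r), by have := i.isLt; omega⟩ u := by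
      intro u
      rw [embedLast_apply_in M i _ hi (by simp)]
      congr 1
      apply Fin.ext
      simp
    by_cases hj : N - r ≤ (j:ℕ)
    · have hrw2 : ∀ u : Fin r,
          embedLast N r M' ⟨N - r + (u:ℕ), by have := u.isLt; omega⟩ j
            = M' u ⟨(j:ℕ) - (N-r), by have := j.isLt; omega⟩ := by
        intro u
        rw [embedLast_apply_in M' _ j (by simp) hj]
        congr 1
        apply Fin.ext
        simp
      rw [embedLast_apply_in (M*M') i j hi hj, Matrix.mul_apply]
      exact Finset.sum_congr rfl fun u _ => by rw [hrw u, hrw2 u]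
    · rw [embedLast_apply_out (M*M') i j (by tauto), if_neg (by omega)]
      apply Finset.sum_eq_zero
      intro u _
      rw [embedLast_apply_out M' _ j (by tauto), if_neg (by simp <;> omega), mul_zero]
  · have hz : ∀ l : Fin N, l ≠ i → embedLast N r M i l * embedLast N r M' l j = 0 := by
      intro l hl
      rw [embedLast_apply_out M i l (by tauto), if_neg (fun h => hl (Fin.ext h.symm)), zero_mul]
    rw [Finset.sum_eq_single i (fun l _ h => hz l h) (by intro h; exact absurd (Finset.mem_univ i) h)]
    rw [embedLast_apply_out M i i (by tauto), if_pos rfl, one_mul,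
      embedLast_apply_out M' i j (by tauto), embedLast_apply_out (M*M') i j (by tauto)]

lemma embedLast_one {N r : ℕ} : embedLast N r (1 : Matrix (Fin r) (Fin r) ℂ) = 1 := by
  ext i j
  rw [Matrix.one_apply]
  by_cases h : N - r ≤ (i:ℕ) ∧ N - r ≤ (j:ℕ)
  · rw [embedLast_apply_in 1 i j h.1 h.2, Matrix.one_apply]
    by_cases hij : i = j
    · subst hij; rw [if_pos rfl, if_pos rfl]
    · rw [if_neg hij, if_neg (by intro hh; exact hij (Fin.ext (by
        have := congrArg Fin.val hh; simp at this; omega)))]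
  · rw [embedLast_apply_out 1 i j h]
    by_cases hij : i = j
    · subst hij; rw [if_pos rfl, if_pos rfl]
    · rw [if_neg (fun hh => hij (Fin.ext hh)), if_neg hij]

def rowFormula (r : ℕ) (p : ℕ → Matrix (Fin 1) (Fin r) ℂ) (q : ℕ → Matrix (Fin r) (Fin 1) ℂ)
    (a : ℕ → Matrix (Fin r) (Fin r) ℂ) (d : ℕ → ℂ) (i j : ℕ) : ℂ :=
  if hj : j < r then (p i * aGT r a i 0) 0 ⟨j, hj⟩
  else if j + 2 ≤ i + r then (p i * aGT r a i (j + 1 - r) * q (j + 1 - r)) 0 0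
  else if j + 1 = i + r then d i
  else 0

def midFormula (r : ℕ) (q : ℕ → Matrix (Fin r) (Fin 1) ℂ)
    (a : ℕ → Matrix (Fin r) (Fin r) ℂ) (m : ℕ) (t : Fin r) (j : ℕ) : ℂ :=
  if hj : j < r then (aGT r a (m+1) 0) t ⟨j, hj⟩
  else if j < m + r then (aGT r a (m+1) (j+1-r) * q (j+1-r)) t 0
  else 0

def Wform (N r : ℕ) (p : ℕ → Matrix (Fin 1) (Fin r) ℂ) (q : ℕ → Matrix (Fin r) (Fin 1) ℂ)
    (a : ℕ → Matrix (Fin r) (Fin r) ℂ) (d : ℕ → ℂ) (m : ℕ) : Matrix (Fin N) (Fin N) ℂ :=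
  Matrix.of fun i j =>
    if h0 : (i:ℕ) < m then rowFormula r p q a d ((i:ℕ)+1) (j:ℕ)
    else if h : (i:ℕ) < m + r then midFormula r q a m ⟨(i:ℕ) - m, by omega⟩ (j:ℕ)
    else if (i:ℕ) = (j:ℕ) then 1 else 0

lemma Wform_zero {N r : ℕ} (p : ℕ → Matrix (Fin 1) (Fin r) ℂ) (q : ℕ → Matrix (Fin r) (Fin 1) ℂ)
    (a : ℕ → Matrix (Fin r) (Fin r) ℂ) (d : ℕ → ℂ) :
    Wform N r p q a d 0 = 1 := by
  ext i j
  unfold Wform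
  rw [Matrix.of_apply, dif_neg (by omega), Matrix.one_apply]
  by_cases h : (i:ℕ) < r
  · rw [dif_pos (by omega)]
    unfold midFormula
    by_cases hj : (j:ℕ) < r
    · rw [dif_pos hj, aGT_eq_one r a (by omega), Matrix.one_apply]
      by_cases hij : (i:ℕ) = (j:ℕ)
      · rw [if_pos (show _ = _ from Fin.ext (by simp [hij])), if_pos (Fin.ext hij)]
      · rw [if_neg (fun hh => hij (by have := congrArg Fin.val hh; simp at this; omega)),
            if_neg (fun hh => hij (congrArg Fin.val hh))]
    · rw [dif_neg hj, if_neg (by omega), if_neg (by intro hh; exact absurd (Fin.val_eq_of_eq hh) (by omega))]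
  · rw [dif_neg (by omega)]
    by_cases hij : i = j
    · subst hij; rw [if_pos rfl, if_pos rfl]
    · rw [if_neg (fun hh => hij (Fin.ext hh)), if_neg hij]

section Helpers
variable {N r : ℕ} (p : ℕ → Matrix (Fin 1) (Fin r) ℂ) (q : ℕ → Matrix (Fin r) (Fin 1) ℂ)
  (a : ℕ → Matrix (Fin r) (Fin r) ℂ) (d : ℕ → ℂ)

lemma rowFormula_lt (i j : ℕ) (hj : j < r) :
    rowFormula r p q a d i j = (p i * aGT r a i 0) 0 ⟨j, hj⟩ := by
  unfold rowFormula; rw [dif_pos hj]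

lemma rowFormula_mid (i j : ℕ) (hj : ¬ j < r) (h2 : j + 2 ≤ i + r) :
    rowFormula r p q a d i j = (p i * aGT r a i (j + 1 - r) * q (j + 1 - r)) 0 0 := by
  unfold rowFormula; rw [dif_neg hj, if_pos h2]

lemma rowFormula_diag (i j : ℕ) (hj : ¬ j < r) (h2 : ¬ j + 2 ≤ i + r) (h3 : j + 1 = i + r) :
    rowFormula r p q a d i j = d i := by
  unfold rowFormula; rw [dif_neg hj, if_neg h2, if_pos h3]

lemma rowFormula_zero (i j : ℕ) (hj : ¬ j < r) (h2 : ¬ j + 2 ≤ i + r) (h3 : ¬ j + 1 = i + r) :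
    rowFormula r p q a d i j = 0 := by
  unfold rowFormula; rw [dif_neg hj, if_neg h2, if_neg h3]

lemma midFormula_lt (m : ℕ) (t : Fin r) (j : ℕ) (hj : j < r) :
    midFormula r q a m t j = (aGT r a (m+1) 0) t ⟨j, hj⟩ := by
  unfold midFormula; rw [dif_pos hj]

lemma midFormula_mid (m : ℕ) (t : Fin r) (j : ℕ) (hj : ¬ j < r) (h2 : j < m + r) :
    midFormula r q a m t j = (aGT r a (m+1) (j+1-r) * q (j+1-r)) t 0 := by
  unfold midFormula; rw [dif_neg hj, if_pos h2]

lemma midFormula_zero (m : ℕ) (t : Fin r) (j : ℕ) (hj : ¬ j < r) (h2 : ¬ j < m + r) :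
    midFormula r q a m t j = 0 := by
  unfold midFormula; rw [dif_neg hj, if_neg h2]

lemma Wform_row_lt (m : ℕ) (i j : Fin N) (h : (i:ℕ) < m) :
    Wform N r p q a d m i j = rowFormula r p q a d ((i:ℕ)+1) (j:ℕ) := by
  unfold Wform; rw [Matrix.of_apply, dif_pos h]

lemma Wform_row_mid (m : ℕ) (i j : Fin N) (h1 : ¬ (i:ℕ) < m) (h2 : (i:ℕ) < m + r) :
    Wform N r p q a d m i j = midFormula r q a m ⟨(i:ℕ) - m, by omega⟩ (j:ℕ) := by
  unfold Wform; rw [Matrix.of_apply, dif_neg h1, dif_pos h2]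

lemma Wform_row_hi (m : ℕ) (i j : Fin N) (h1 : ¬ (i:ℕ) < m) (h2 : ¬ (i:ℕ) < m + r) :
    Wform N r p q a d m i j = if (i:ℕ) = (j:ℕ) then 1 else 0 := by
  unfold Wform; rw [Matrix.of_apply, dif_neg h1, dif_neg h2]

end Helpers

lemma Wform_succ_eq {N r : ℕ} (V : Matrix (Fin (r+1)) (Fin (r+1)) ℂ)
    (p : ℕ → Matrix (Fin 1) (Fin r) ℂ) (q : ℕ → Matrix (Fin r) (Fin 1) ℂ)
    (a : ℕ → Matrix (Fin r) (Fin r) ℂ) (d : ℕ → ℂ) (m : ℕ) (hm : m + 1 + r ≤ N)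
    (hp : ∀ u : Fin r, V 0 u.castSucc = p (m+1) 0 u)
    (hd : V 0 (Fin.last r) = d (m+1))
    (ha : ∀ t u : Fin r, V t.succ u.castSucc = a (m+1) t u)
    (hq : ∀ t : Fin r, V t.succ (Fin.last r) = q (m+1) t 0) :
    embed N r (m+1) V * Wform N r p q a d m = Wform N r p q a d (m+1) := by
  ext i j
  rw [Matrix.mul_apply]
  by_cases hi : m ≤ (i:ℕ) ∧ (i:ℕ) < m + 1 + r
  · have hz : ∀ l : Fin N, ((l:ℕ) < m ∨ m + (r+1) ≤ (l:ℕ)) →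
        embed N r (m+1) V i l * Wform N r p q a d m l j = 0 := by
      intro l hl
      rw [embed_apply_out (m+1) V i l (by omega), if_neg (by omega), zero_mul]
    rw [sum_window m (r+1) (by omega) _ hz]
    have e1 : ∀ u : Fin (r+1),
        embed N r (m+1) V i ⟨m + (u:ℕ), by have := u.isLt; omega⟩
          = V ⟨(i:ℕ) - m, by omega⟩ u := by
      intro u
      rw [embed_apply_in (m+1) V i _ (by omega) (by omega) (by simp <;> omega)
        (by have := u.isLt; simp <;> omega)]
      congr 1 <;> (apply Fin.ext; simp <;> omega)
    rw [Finset.sum_congr rfl (fun u _ => by rw [e1 u])]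
    rw [Fin.sum_univ_castSucc]
    have eMid : ∀ u : Fin r,
        Wform N r p q a d m ⟨m + ((u.castSucc : Fin (r+1)):ℕ), by have := u.isLt; omega⟩ j
          = midFormula r q a m u (j:ℕ) := by
      intro u
      have hu := u.isLt
      rw [Wform_row_mid p q a d m _ j (by simp <;> omega) (by simp <;> omega)]
      congr 1
      apply Fin.ext
      simp
    have eLast :
        Wform N r p q a d m ⟨m + ((Fin.last r : Fin (r+1)):ℕ), by omega⟩ j
          = if m + r = (j:ℕ) then 1 else 0 := by
      rw [Wform_row_hi p q a d m _ j (by simp) (by simp)]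
      simp [Fin.val_last]
    rw [Finset.sum_congr rfl (fun u _ => by rw [eMid u]), eLast]
    by_cases him : (i:ℕ) = m
    · have hV0 : (⟨(i:ℕ) - m, by omega⟩ : Fin (r+1)) = 0 := Fin.ext (by simp [him])
      rw [hV0, hd]
      rw [Finset.sum_congr rfl (fun u _ => by rw [hp u])]
      rw [Wform_row_lt p q a d (m+1) i j (by omega), him]
      by_cases hj : (j:ℕ) < r
      · rw [rowFormula_lt p q a d (m+1) (j:ℕ) hj, Matrix.mul_apply,
          Finset.sum_congr rfl (fun u _ => by rw [midFormula_lt q a m u (j:ℕ) hj]),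
          if_neg (by omega), mul_zero, add_zero]
      · by_cases hj2 : (j:ℕ) < m + r
        · rw [rowFormula_mid p q a d (m+1) (j:ℕ) hj (by omega), Matrix.mul_assoc,
            Matrix.mul_apply,
            Finset.sum_congr rfl (fun u _ => by rw [midFormula_mid q a m u (j:ℕ) hj hj2]),
            if_neg (by omega), mul_zero, add_zero]
        · by_cases hj3 : (j:ℕ) = m + r
          · rw [rowFormula_diag p q a d (m+1) (j:ℕ) hj (by omega) (by omega),
              Finset.sum_congr rfl (fun u _ => by
                rw [midFormula_zero q a m u (j:ℕ) hj hj2, mul_zero]),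
              Finset.sum_const_zero, if_pos (by omega), mul_one, zero_add]
          · rw [rowFormula_zero p q a d (m+1) (j:ℕ) hj (by omega) (by omega),
              Finset.sum_congr rfl (fun u _ => by
                rw [midFormula_zero q a m u (j:ℕ) hj hj2, mul_zero]),
              Finset.sum_const_zero, if_neg (by omega), mul_zero, zero_add]
    · -- i > m : i = m + 1 + T
      have hT : (i:ℕ) - m - 1 < r := by omega
      set T : Fin r := ⟨(i:ℕ) - m - 1, hT⟩ with hTdef
      have hVt : (⟨(i:ℕ) - m, by omega⟩ : Fin (r+1)) = T.succ := Fin.ext (by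
        simp [hTdef, Fin.val_succ]; omega)
      rw [hVt, hq]
      rw [Finset.sum_congr rfl (fun u _ => by rw [ha T u])]
      rw [Wform_row_mid p q a d (m+1) i j (by omega) (by omega)]
      have hTT : (⟨(i:ℕ) - (m+1), by omega⟩ : Fin r) = T := Fin.ext (by simp [hTdef]; omega)
      rw [hTT]
      by_cases hj : (j:ℕ) < r
      · rw [midFormula_lt q a (m+1) T (j:ℕ) hj, ← aGT_succ r a (by omega), Matrix.mul_apply,
          Finset.sum_congr rfl (fun u _ => by rw [midFormula_lt q a m u (j:ℕ) hj]),
          if_neg (by omega), mul_zero, add_zero]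
      · by_cases hj2 : (j:ℕ) < m + r
        · rw [midFormula_mid q a (m+1) T (j:ℕ) hj (by omega),
            ← aGT_succ r a (show ((j:ℕ)+1-r) + 1 ≤ m + 1 by omega), Matrix.mul_assoc,
            Matrix.mul_apply,
            Finset.sum_congr rfl (fun u _ => by rw [midFormula_mid q a m u (j:ℕ) hj hj2]),
            if_neg (by omega), mul_zero, add_zero]
        · by_cases hj3 : (j:ℕ) = m + r
          · rw [midFormula_mid q a (m+1) T (j:ℕ) hj (by omega)]
            have e2 : (j:ℕ) + 1 - r = m + 1 := by omega
            rw [e2, aGT_eq_one r a (by omega), Matrix.one_mul,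
              Finset.sum_congr rfl (fun u _ => by
                rw [midFormula_zero q a m u (j:ℕ) hj hj2, mul_zero]),
              Finset.sum_const_zero, if_pos (by omega), mul_one, zero_add]
          · rw [midFormula_zero q a (m+1) T (j:ℕ) hj (by omega),
              Finset.sum_congr rfl (fun u _ => by
                rw [midFormula_zero q a m u (j:ℕ) hj hj2, mul_zero]),
              Finset.sum_const_zero, if_neg (by omega), mul_zero, zero_add]
  · have hz : ∀ l : Fin N, l ≠ i → embed N r (m+1) V i l * Wform N r p q a d m l j = 0 := by
      intro l hl
      rw [embed_apply_out (m+1) V i l (by omega), if_neg (fun h => hl (Fin.ext h.symm)), zero_mul]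
    rw [Finset.sum_eq_single i (fun l _ h => hz l h)
      (fun h => absurd (Finset.mem_univ i) h)]
    rw [embed_apply_out (m+1) V i i (by omega), if_pos rfl, one_mul]
    by_cases hil : (i:ℕ) < m
    · rw [Wform_row_lt p q a d m i j hil, Wform_row_lt p q a d (m+1) i j (by omega)]
    · rw [Wform_row_hi p q a d m i j hil (by omega),
        Wform_row_hi p q a d (m+1) i j (by omega) (by omega)]

lemma conjT_prodAsc {N r : ℕ} (hNr : r < N) (Uk : ℕ → Matrix (Fin (r+1)) (Fin (r+1)) ℂ)
    (m : ℕ) (hm : m ≤ N - r) :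
    (((List.range' 1 m).map (fun k => embed N r k (Uk k))).prod)ᴴ =
      Wform N r (fun k => blkP r ((Uk k)ᴴ)) (fun k => blkQ r ((Uk k)ᴴ))
        (fun k => blkA r ((Uk k)ᴴ)) (fun k => blkD r ((Uk k)ᴴ)) m := by
  induction m with
  | zero => simp [Wform_zero]
  | succ m ih =>
    rw [List.range'_concat]
    have e0 : 1 + 1 * m = m + 1 := by omega
    rw [e0, List.map_append, List.prod_append]
    simp only [List.map_cons, List.map_nil, List.prod_cons, List.prod_nil, mul_one]
    rw [Matrix.conjTranspose_mul, embed_conjTranspose, ih (by omega)]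
    exact Wform_succ_eq ((Uk (m+1))ᴴ) _ _ _ _ m (by omega)
      (fun u => rfl) rfl (fun t u => rfl) (fun t => rfl)

def Bform (N r : ℕ) (p : ℕ → Matrix (Fin 1) (Fin r) ℂ) (q : ℕ → Matrix (Fin r) (Fin 1) ℂ)
    (a : ℕ → Matrix (Fin r) (Fin r) ℂ) (d : ℕ → ℂ) (P : Matrix (Fin r) (Fin r) ℂ) :
    Matrix (Fin N) (Fin N) ℂ :=
  Matrix.of fun i j =>
    if h0 : (i:ℕ) < N - r then rowFormula r p q a d ((i:ℕ)+1) (j:ℕ)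
    else if hj : (j:ℕ) < r then
      (P * aGT r a (N-r+1) 0) ⟨(i:ℕ) - (N-r), by have := i.isLt; omega⟩ ⟨(j:ℕ), hj⟩
    else (P * aGT r a (N-r+1) ((j:ℕ)+1-r) * q ((j:ℕ)+1-r))
      ⟨(i:ℕ) - (N-r), by have := i.isLt; omega⟩ 0

lemma embedLast_mul_Wform {N r : ℕ} (hNr : r < N) (P : Matrix (Fin r) (Fin r) ℂ)
    (p : ℕ → Matrix (Fin 1) (Fin r) ℂ) (q : ℕ → Matrix (Fin r) (Fin 1) ℂ)
    (a : ℕ → Matrix (Fin r) (Fin r) ℂ) (d : ℕ → ℂ) :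
    embedLast N r P * Wform N r p q a d (N - r) = Bform N r p q a d P := by
  ext i j
  rw [Matrix.mul_apply]
  by_cases hi : N - r ≤ (i:ℕ)
  · have hz : ∀ l : Fin N, ((l:ℕ) < N - r ∨ (N - r) + r ≤ (l:ℕ)) →
        embedLast N r P i l * Wform N r p q a d (N-r) l j = 0 := by
      intro l hl
      have hl' : (l:ℕ) < N - r := by have := l.isLt; omega
      rw [embedLast_apply_out P i l (by omega), if_neg (by omega), zero_mul]
    rw [sum_window (N-r) r (by omega) _ hz]
    have e1 : ∀ u : Fin r,
        embedLast N r P i ⟨N - r + (u:ℕ), by have := u.isLt; omega⟩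
          = P ⟨(i:ℕ) - (N-r), by have := i.isLt; omega⟩ u := by
      intro u
      rw [embedLast_apply_in P i _ hi (by simp)]
      congr 1
      apply Fin.ext
      simp
    have e2 : ∀ u : Fin r,
        Wform N r p q a d (N-r) ⟨N - r + (u:ℕ), by have := u.isLt; omega⟩ j
          = midFormula r q a (N-r) u (j:ℕ) := by
      intro u
      have hu := u.isLt
      rw [Wform_row_mid p q a d (N-r) _ j (by simp <;> omega) (by simp <;> omega)]
      congr 1
      apply Fin.ext
      simp
    rw [Finset.sum_congr rfl (fun u _ => by rw [e1 u, e2 u])]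
    unfold Bform
    rw [Matrix.of_apply, dif_neg (by omega)]
    by_cases hj : (j:ℕ) < r
    · rw [dif_pos hj, Matrix.mul_apply,
        Finset.sum_congr rfl (fun u _ => by rw [midFormula_lt q a (N-r) u (j:ℕ) hj])]
    · rw [dif_neg hj, Matrix.mul_assoc, Matrix.mul_apply,
        Finset.sum_congr rfl (fun u _ => by
          rw [midFormula_mid q a (N-r) u (j:ℕ) hj (by have := j.isLt; omega)])]
  · have hz : ∀ l : Fin N, l ≠ i → embedLast N r P i l * Wform N r p q a d (N-r) l j = 0 := by
      intro l hl
      rw [embedLast_apply_out P i l (by omega), if_neg (fun h => hl (Fin.ext h.symm)), zero_mul]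
    rw [Finset.sum_eq_single i (fun l _ h => hz l h) (fun h => absurd (Finset.mem_univ i) h)]
    rw [embedLast_apply_out P i i (by omega), if_pos rfl, one_mul,
      Wform_row_lt p q a d (N-r) i j (by omega)]
    unfold Bform
    rw [Matrix.of_apply, dif_pos (by omega)]

lemma conjT_U_eq {N r : ℕ} (hNr : r < N)
    (Uk : ℕ → Matrix (Fin (r+1)) (Fin (r+1)) ℂ) (Ulast : Matrix (Fin r) (Fin r) ℂ)
    (U : Matrix (Fin N) (Fin N) ℂ)
    (hU : U = prodAsc N r Uk * embedLast N r Ulast) :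
    Uᴴ = Bform N r (fun k => blkP r ((Uk k)ᴴ)) (fun k => blkQ r ((Uk k)ᴴ))
      (fun k => blkA r ((Uk k)ᴴ)) (fun k => blkD r ((Uk k)ᴴ)) Ulastᴴ := by
  rw [hU, Matrix.conjTranspose_mul, embedLast_conjTranspose]
  unfold prodAsc
  rw [conjT_prodAsc hNr Uk (N-r) le_rfl, embedLast_mul_Wform hNr]

lemma embed_mem_unitary {N r : ℕ} (k : ℕ) (hk : 1 ≤ k) (hkN : k + r ≤ N)
    (M : Matrix (Fin (r+1)) (Fin (r+1)) ℂ) (hM : M ∈ Matrix.unitaryGroup (Fin (r+1)) ℂ) :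
    embed N r k M ∈ Matrix.unitaryGroup (Fin N) ℂ := by
  rw [Matrix.mem_unitaryGroup_iff'] at hM ⊢
  rw [Matrix.star_eq_conjTranspose, embed_conjTranspose, embed_mul k hk hkN,
    ← Matrix.star_eq_conjTranspose, hM, embed_one]

lemma embedLast_mem_unitary {N r : ℕ} (hrN : r ≤ N)
    (M : Matrix (Fin r) (Fin r) ℂ) (hM : M ∈ Matrix.unitaryGroup (Fin r) ℂ) :
    embedLast N r M ∈ Matrix.unitaryGroup (Fin N) ℂ := by
  rw [Matrix.mem_unitaryGroup_iff'] at hM ⊢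
  rw [Matrix.star_eq_conjTranspose, embedLast_conjTranspose, embedLast_mul hrN,
    ← Matrix.star_eq_conjTranspose, hM, embedLast_one]

/-- If `U = Ũ_1·Ũ_2⋯Ũ_{N-r+1}` is a product of embedded unitary factors, then `U*` is a
unitary lower Green and upper band matrix of order `r`, whose lower Green generators are
given by the blocks of the partitions `U_k* = [[p_U(k), d_U(k)], [a_U(k), q_U(k)]]`,
`p_U(N-r+1) = U_{N-r+1}*`, and whose diagonal entries satisfy `U*(k, k+r) = d_U(k)`. -/

theorem adjoint_product_is_lowerGreen_upperBand (N r : ℕ) (hr : 0 < r) (hNr : r < N)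
    (Uk : ℕ → Matrix (Fin (r + 1)) (Fin (r + 1)) ℂ) (Ulast : Matrix (Fin r) (Fin r) ℂ)
    (hUk : ∀ (k : ℕ), 1 ≤ k → k ≤ N - r → Uk k ∈ Matrix.unitaryGroup (Fin (r + 1)) ℂ)
    (hUlast : Ulast ∈ Matrix.unitaryGroup (Fin r) ℂ)
    (U : Matrix (Fin N) (Fin N) ℂ)
    (hU : U = prodAsc N r Uk * embedLast N r Ulast) :
    Uᴴ ∈ Matrix.unitaryGroup (Fin N) ℂ ∧
    IsLowerGreen N r Uᴴ ∧ IsUpperBand N r Uᴴ ∧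
    IsLowerGreenGenerators N r hNr (fun k => blkP r ((Uk k)ᴴ)) (fun k => blkQ r ((Uk k)ᴴ))
      (fun k => blkA r ((Uk k)ᴴ)) Ulastᴴ Uᴴ ∧
    (∀ (k : ℕ) (hk1 : 1 ≤ k) (hk2 : k ≤ N - r),
      Uᴴ ⟨k - 1, by omega⟩ ⟨k + r - 1, by omega⟩ = blkD r ((Uk k)ᴴ)) := by
  have hB := conjT_U_eq hNr Uk Ulast U hU
  refine ⟨?_, ?_, ?_, ?_, ?_⟩
  · skip
    have hUm : U ∈ Matrix.unitaryGroup (Fin N) ℂ := by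
      rw [hU]
      refine mul_mem ?_ (embedLast_mem_unitary (le_of_lt hNr) Ulast hUlast)
      unfold prodAsc
      apply Submonoid.list_prod_mem
      intro x hx
      simp only [List.mem_map] at hx
      obtain ⟨k, hk, rfl⟩ := hx
      rw [List.mem_range'_1] at hk
      exact embed_mem_unitary k hk.1 (by omega) (Uk k) (hUk k hk.1 (by omega))
    rw [← Matrix.star_eq_conjTranspose]
    exact Unitary.star_mem hUm
  · skip
    intro k hk1 hk2
    set pp : ℕ → Matrix (Fin 1) (Fin r) ℂ := fun k => blkP r ((Uk k)ᴴ) with hpp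
    set qq : ℕ → Matrix (Fin r) (Fin 1) ℂ := fun k => blkQ r ((Uk k)ᴴ) with hqq
    set aa : ℕ → Matrix (Fin r) (Fin r) ℂ := fun k => blkA r ((Uk k)ᴴ) with haa
    set dd : ℕ → ℂ := fun k => blkD r ((Uk k)ᴴ) with hdd
    set C : Matrix (Fin r) (Fin (k + r - 1)) ℂ := Matrix.of (fun u j =>
      if hj : (j:ℕ) < r then aGT r aa k 0 u ⟨(j:ℕ), hj⟩
      else (aGT r aa k ((j:ℕ)+1-r) * qq ((j:ℕ)+1-r)) u 0) with hC
    set D : Matrix (Fin (N - k + 1)) (Fin r) ℂ := Matrix.of (fun i u =>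
      if h : k - 1 + (i:ℕ) < N - r then (pp (k + (i:ℕ)) * aGT r aa (k + (i:ℕ)) (k-1)) 0 u
      else (Ulastᴴ * aGT r aa (N-r+1) (k-1))
        ⟨k - 1 + (i:ℕ) - (N-r), by have := i.isLt; omega⟩ u) with hD
    have hSub : Uᴴ.submatrix
        (fun i : Fin (N - k + 1) => (⟨k - 1 + (i : ℕ), by have := i.isLt; omega⟩ : Fin N))
        (fun j : Fin (k + r - 1) => (⟨(j : ℕ), by have := j.isLt; omega⟩ : Fin N)) = D * C := by
      ext i j
      rw [Matrix.submatrix_apply, hB, Matrix.mul_apply]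
      unfold Bform
      rw [Matrix.of_apply]
      have hji := j.isLt
      have hii := i.isLt
      by_cases h0 : k - 1 + (i:ℕ) < N - r
      · rw [dif_pos h0, show k - 1 + (i:ℕ) + 1 = k + (i:ℕ) from by omega]
        by_cases hj : (j:ℕ) < r
        · rw [rowFormula_lt _ _ _ _ (k + (i:ℕ)) ((j:ℕ)) hj]
          have hsplit : aGT r aa (k + (i:ℕ)) 0 = aGT r aa (k + (i:ℕ)) (k-1) * aGT r aa k 0 := by
            have h := aGT_mul r aa (show 0 ≤ k - 1 by omega) (show k - 1 < k + (i:ℕ) by omega)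
            rw [show k - 1 + 1 = k from by omega] at h
            exact h.symm
          rw [hsplit, ← Matrix.mul_assoc, Matrix.mul_apply]
          refine Finset.sum_congr rfl (fun u _ => ?_)
          rw [hD, hC, Matrix.of_apply, Matrix.of_apply, dif_pos h0, dif_pos hj]
        · rw [rowFormula_mid _ _ _ _ (k + (i:ℕ)) ((j:ℕ)) hj (by omega)]
          have hsplit : aGT r aa (k + (i:ℕ)) ((j:ℕ)+1-r)
              = aGT r aa (k + (i:ℕ)) (k-1) * aGT r aa k ((j:ℕ)+1-r) := by
            have h := aGT_mul r aa (show (j:ℕ)+1-r ≤ k - 1 by omega)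
              (show k - 1 < k + (i:ℕ) by omega)
            rw [show k - 1 + 1 = k from by omega] at h
            exact h.symm
          rw [hsplit]
          rw [show pp (k+(i:ℕ)) * (aGT r aa (k+(i:ℕ)) (k-1) * aGT r aa k ((j:ℕ)+1-r)) * qq ((j:ℕ)+1-r)
              = (pp (k+(i:ℕ)) * aGT r aa (k+(i:ℕ)) (k-1)) * (aGT r aa k ((j:ℕ)+1-r) * qq ((j:ℕ)+1-r))
            from by simp only [Matrix.mul_assoc]]
          rw [Matrix.mul_apply]
          refine Finset.sum_congr rfl (fun u _ => ?_)
          rw [hD, hC, Matrix.of_apply, Matrix.of_apply, dif_pos h0, dif_neg hj]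
      · rw [dif_neg h0]
        by_cases hj : (j:ℕ) < r
        · rw [dif_pos hj]
          have hsplit : aGT r aa (N-r+1) 0 = aGT r aa (N-r+1) (k-1) * aGT r aa k 0 := by
            have h := aGT_mul r aa (show 0 ≤ k - 1 by omega) (show k - 1 < N-r+1 by omega)
            rw [show k - 1 + 1 = k from by omega] at h
            exact h.symm
          rw [hsplit, ← Matrix.mul_assoc, Matrix.mul_apply]
          refine Finset.sum_congr rfl (fun u _ => ?_)
          rw [hD, hC, Matrix.of_apply, Matrix.of_apply, dif_neg h0, dif_pos hj]
        · rw [dif_neg hj]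
          have hsplit : aGT r aa (N-r+1) ((j:ℕ)+1-r)
              = aGT r aa (N-r+1) (k-1) * aGT r aa k ((j:ℕ)+1-r) := by
            have h := aGT_mul r aa (show (j:ℕ)+1-r ≤ k - 1 by omega)
              (show k - 1 < N-r+1 by omega)
            rw [show k - 1 + 1 = k from by omega] at h
            exact h.symm
          rw [hsplit]
          rw [show Ulastᴴ * (aGT r aa (N-r+1) (k-1) * aGT r aa k ((j:ℕ)+1-r)) * qq ((j:ℕ)+1-r)
              = (Ulastᴴ * aGT r aa (N-r+1) (k-1)) * (aGT r aa k ((j:ℕ)+1-r) * qq ((j:ℕ)+1-r))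
            from by simp only [Matrix.mul_assoc]]
          rw [Matrix.mul_apply]
          refine Finset.sum_congr rfl (fun u _ => ?_)
          rw [hD, hC, Matrix.of_apply, Matrix.of_apply, dif_neg h0, dif_neg hj]
    have hrank : (D * C).rank ≤ r := by
      calc (D * C).rank ≤ C.rank := Matrix.rank_mul_le_right D C
        _ ≤ Fintype.card (Fin r) := Matrix.rank_le_card_height C
        _ = r := Fintype.card_fin r
    exact le_trans (le_of_eq (congrArg Matrix.rank hSub)) hrank
  · skip
    intro i j hij
    rw [hB]
    unfold Bform
    rw [Matrix.of_apply]
    by_cases h0 : (i:ℕ) < N - r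
    · rw [dif_pos h0, rowFormula_zero _ _ _ _ _ _ (by omega) (by omega) (by omega)]
    · exfalso
      have := j.isLt
      omega
  · refine ⟨?_, ?_, ?_, ?_⟩
    · intro i hi1 hi2 j
      rw [hB]
      unfold Bform
      rw [Matrix.of_apply, dif_pos (show i - 1 < N - r by omega),
        show i - 1 + 1 = i from by omega,
        rowFormula_lt _ _ _ _ _ _ j.isLt]
    · intro i hi1 hi2 s hs1 hs2
      rw [hB]
      unfold Bform
      rw [Matrix.of_apply, dif_pos (show i - 1 < N - r by omega),
        show i - 1 + 1 = i from by omega,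
        rowFormula_mid _ _ _ _ i (r+s-2) (show ¬ (r+s-2 < r) by omega)
          (show r+s-2+2 ≤ i+r by omega),
        show r + s - 2 + 1 - r = s - 1 from by omega]
    · intro t j
      rw [hB]
      unfold Bform
      rw [Matrix.of_apply, dif_neg (show ¬ (N - r + (t:ℕ) < N - r) by omega),
        dif_pos j.isLt]
      have h1 : N - r + (t:ℕ) - (N - r) = (t:ℕ) := by omega
      simp only [h1, Fin.eta]
    · intro t s hs1 hs2
      rw [hB]
      unfold Bform
      rw [Matrix.of_apply, dif_neg (show ¬ (N - r + (t:ℕ) < N - r) by omega),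
        dif_neg (show ¬ ((r + s - 2 : ℕ) < r) by omega),
        show r + s - 2 + 1 - r = s - 1 from by omega]
      have h1 : N - r + (t:ℕ) - (N - r) = (t:ℕ) := by omega
      simp only [h1, Fin.eta]
  · skip
    intro k hk1 hk2
    rw [hB]
    unfold Bform
    rw [Matrix.of_apply, dif_pos (show k - 1 < N - r by omega)]
    rw [show k - 1 + 1 = k from by omega]
    rw [rowFormula_diag _ _ _ _ k (k+r-1) (show ¬ (k+r-1 < r) by omega)
      (show ¬ (k+r-1+2 ≤ k+r) by omega) (show k+r-1+1 = k+r by omega)]
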